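/- Let k be a field, let p̃ ∈ k[x] be a monic separable polynomial with splitting field K over k, let m ≥ 1 and set p = p̃^m. Suppose h ∈ k[x] is such that, in K[x], (x − λ)^m divides h − λ for every root λ of p̃ in K. Then p̃ divides x − h in k[x], p divides (x − h)^m in k[x], and p divides p̃∘h (the composition p̃(h)) in k[x]. Consequently, for any unital associative k-algebra A and any u ∈ A with p(u) = 0, one has p̃(h(u)) = 0 and (u − h(u))^m = 0, so that (h(u), u − h(u)) is a Jordan–Chevalley decomposition of u. -/

import Mathlib

open Polynomial

/-- An element of a `k`-algebra is absolutely semisimple if it has a separable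
annihilating polynomial. -/
def AbsSemisimple (k : Type*) [Field k] {A : Type*} [Ring A] [Algebra k A] (u : A) : Prop :=
  ∃ f : k[X], f.Separable ∧ aeval u f = 0

/-- A Jordan–Chevalley decomposition of `u` is a pair `(d, s)` with `d` absolutely
semisimple, `s` nilpotent, `u = d + s` and `d s = s d`. -/
def IsJordanChevalley (k : Type*) [Field k] {A : Type*} [Ring A] [Algebra k A]
    (u d s : A) : Prop :=
  AbsSemisimple k d ∧ IsNilpotent s ∧ u = d + s ∧ d * s = s * d

theorem congruence_solution_gives_jordan_chevalley
    {k K : Type*} [Field k] [Field K] [Algebra k K]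
    (ptilde : k[X]) (hmon : ptilde.Monic) (hsep : ptilde.Separable)
    (hsplit : IsSplittingField k K ptilde)
    (m : ℕ) (hm : 1 ≤ m) (p : k[X]) (hp : p = ptilde ^ m)
    (h : k[X])
    (hcong : ∀ lam : K, aeval lam ptilde = 0 →
      (X - C lam) ^ m ∣ h.map (algebraMap k K) - C lam) :
    ptilde ∣ (X - h) ∧ p ∣ (X - h) ^ m ∧ p ∣ ptilde.comp h ∧
    ∀ (A : Type*) [Ring A] [Algebra k A] (u : A), aeval u p = 0 →
      aeval (aeval u h) ptilde = 0 ∧ (u - aeval u h) ^ m = 0 ∧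
      IsJordanChevalley k u (aeval u h) (u - aeval u h) := by
  set φ := algebraMap k K
  set P : K[X] := ptilde.map φ with hP
  have hPmon : P.Monic := hmon.map φ
  have hPsplits : P.Splits :=
    hsplit.splits'
  have hnodup : P.roots.Nodup := nodup_roots (hsep.map)
  set t : Finset K := ⟨P.roots, hnodup⟩ with ht
  have hProd : P = ∏ lam ∈ t, (X - C lam) := by
    conv_lhs => rw [hPsplits.eq_prod_roots_of_monic hPmon]
    rw [Finset.prod_eq_multiset_prod]
  have hroot : ∀ lam ∈ t, aeval lam ptilde = 0 := by
    intro lam hlam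
    have : IsRoot P lam := isRoot_of_mem_roots hlam
    rwa [IsRoot, hP, eval_map, ← aeval_def] at this
  have hpc : (t : Set K).Pairwise (Function.onFun IsCoprime fun lam => (X - C lam) ^ m) := by
    intro a _ b _ hab
    exact (Polynomial.isCoprime_X_sub_C_of_isUnit_sub
      (by simpa using (sub_ne_zero.mpr hab).isUnit)).pow
  have hinj : Function.Injective φ := φ.injective
  -- part 1
  have h1 : ptilde ∣ (X - h) := by
    rw [← map_dvd_map φ hinj hmon]
    rw [Polynomial.map_sub, map_X, ← hP, hProd]
    have hpc1 : (t : Set K).Pairwise (Function.onFun IsCoprime fun lam => X - C lam) :=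
      fun a _ b _ hab => Polynomial.isCoprime_X_sub_C_of_isUnit_sub
        (by simpa using (sub_ne_zero.mpr hab).isUnit)
    refine Finset.prod_dvd_of_coprime hpc1 ?_
    · intro lam hlam
      have hd := hcong lam (hroot lam hlam)
      have hd1 : (X - C lam) ∣ h.map φ - C lam :=
        dvd_trans (dvd_pow_self _ (Nat.one_le_iff_ne_zero.mp hm)) hd
      have : (X - C lam) ∣ (X - C lam) - (h.map φ - C lam) := (dvd_refl _).sub hd1
      simpa using this
  -- part 3
  have h3 : p ∣ ptilde.comp h := by
    rw [hp, ← map_dvd_map φ hinj (hmon.pow m)]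
    rw [Polynomial.map_pow, Polynomial.map_comp, ← hP]
    have hcomp : P.comp (h.map φ) = ∏ lam ∈ t, (h.map φ - C lam) := by
      rw [hProd, prod_comp]
      simp [sub_comp]
    have hpow : P ^ m = ∏ lam ∈ t, (X - C lam) ^ m := by
      rw [hProd, Finset.prod_pow]
    rw [hcomp, hpow]
    exact Finset.prod_dvd_of_coprime hpc fun lam hlam =>
      dvd_trans (hcong lam (hroot lam hlam)) (Finset.dvd_prod_of_mem _ hlam)
  refine ⟨h1, by rw [hp]; exact pow_dvd_pow_of_dvd h1 m, h3, ?_⟩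
  intro A _ _ u hu
  have heval : ∀ q : k[X], p ∣ q → aeval u q = 0 := by
    rintro q ⟨c, rfl⟩
    rw [map_mul, hu, zero_mul]
  have e1 : aeval (aeval u h) ptilde = 0 := by
    rw [← aeval_comp]; exact heval _ h3
  have hdvd2 : p ∣ (X - h) ^ m := by rw [hp]; exact pow_dvd_pow_of_dvd h1 m
  have e2 : (u - aeval u h) ^ m = 0 := by
    have := heval _ hdvd2
    rwa [map_pow, map_sub, aeval_X] at this
  refine ⟨e1, e2, ⟨ptilde, hsep, e1⟩, ⟨m, e2⟩, by abel, ?_⟩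
  have : aeval u h * aeval u (X - h) = aeval u (X - h) * aeval u h := by
    rw [← map_mul, ← map_mul, mul_comm]
  simpa [map_sub, aeval_X] using this
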